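/- Let G and H be finite simple graphs, each with exactly n vertices. Then G and H are isomorphic if and only if the modular product of G and H contains a clique of size n. -/

import Mathlib

open SimpleGraph

/-- The modular product of two simple graphs `G` and `H`: vertices are pairs `(u, v)`,
and `(u, v)` is adjacent to `(u', v')` exactly when `u ≠ u'`, `v ≠ v'`, and
`u` is adjacent to `u'` in `G` if and only if `v` is adjacent to `v'` in `H`. -/
def modularProduct {V W : Type*} (G : SimpleGraph V) (H : SimpleGraph W) :
    SimpleGraph (V × W) where
  Adj p q := p.1 ≠ q.1 ∧ p.2 ≠ q.2 ∧ (G.Adj p.1 q.1 ↔ H.Adj p.2 q.2)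
  symm := ⟨by
    rintro p q ⟨h1, h2, h3⟩
    exact ⟨h1.symm, h2.symm, by rw [G.adj_comm, H.adj_comm]; exact h3⟩⟩
  loopless := ⟨by rintro p ⟨h1, -, -⟩; exact h1 rfl⟩

/-- Finite simple graphs `G` and `H`, each on exactly `n` vertices, are isomorphic iff
their modular product contains a clique of size `n`. -/
theorem iso_iff_modularProduct_clique {V W : Type*} [Fintype V] [Fintype W]
    (G : SimpleGraph V) (H : SimpleGraph W) (n : ℕ)
    (hV : Fintype.card V = n) (hW : Fintype.card W = n) :
    Nonempty (G ≃g H) ↔ ∃ K : Finset (V × W), (modularProduct G H).IsNClique n K := by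
  classical
  constructor
  · rintro ⟨f⟩
    refine ⟨Finset.univ.image (fun u => (u, f u)), ?_, ?_⟩
    · rintro p hp q hq hpq
      simp only [Finset.mem_coe, Finset.mem_image, Finset.mem_univ, true_and] at hp hq
      obtain ⟨u, rfl⟩ := hp
      obtain ⟨u', rfl⟩ := hq
      have huu' : u ≠ u' := by rintro rfl; exact hpq rfl
      exact ⟨huu', fun h => huu' (f.injective h), by simpa using (f.map_adj_iff).symm⟩
    · rw [Finset.card_image_of_injective _ (fun a b h => by simpa using congrArg Prod.fst h)]
      simpa using hV
  · rintro ⟨K, hK, hcard⟩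
    have hfst : Function.Injective (fun p : K => (p : V × W).1) := by
      rintro ⟨p, hp⟩ ⟨q, hq⟩ h
      simp only [Subtype.mk.injEq]
      by_contra hne
      exact (hK hp hq hne).1 h
    have hsnd : Function.Injective (fun p : K => (p : V × W).2) := by
      rintro ⟨p, hp⟩ ⟨q, hq⟩ h
      simp only [Subtype.mk.injEq]
      by_contra hne
      exact (hK hp hq hne).2.1 h
    have hcardK : Fintype.card K = n := by simpa using hcard
    have hbfst : Function.Bijective (fun p : K => (p : V × W).1) :=
      (Fintype.bijective_iff_injective_and_card _).2 ⟨hfst, by rw [hcardK, hV]⟩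
    have hbsnd : Function.Bijective (fun p : K => (p : V × W).2) :=
      (Fintype.bijective_iff_injective_and_card _).2 ⟨hsnd, by rw [hcardK, hW]⟩
    set eV := Equiv.ofBijective _ hbfst
    set eW := Equiv.ofBijective _ hbsnd
    refine ⟨⟨eV.symm.trans eW, ?_⟩⟩
    intro u u'
    show H.Adj (eW (eV.symm u)) (eW (eV.symm u')) ↔ G.Adj u u'
    have h1 : ((eV.symm u : V × W)).1 = u := eV.apply_symm_apply u
    have h1' : ((eV.symm u' : V × W)).1 = u' := eV.apply_symm_apply u'
    by_cases huu : u = u'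
    · subst huu
      simp [SimpleGraph.irrefl]
    · have hne : eV.symm u ≠ eV.symm u' := fun h => huu (by rw [← h1, ← h1', h])
      have hne' : ((eV.symm u : V × W)) ≠ ((eV.symm u' : V × W)) :=
        fun h => hne (Subtype.ext h)
      have hadj := hK (eV.symm u).2 (eV.symm u').2 hne'
      have := hadj.2.2
      rw [h1, h1'] at this
      exact this.symm
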